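/- Let n be a positive integer, let f : ℝ^n → ℝ^n be a topical function and let h ∈ ℝ. Then f has an eigenvector with eigenvalue h (i.e. there exists v ∈ ℝ^n with f(v) = v + h·𝟙) if and only if there exist x ∈ ℝ^n and M ≥ 0 such that ‖f^k(x) − k·h·𝟙‖_∞ ≤ M for all k ∈ ℕ. -/

import Mathlib

open Filter

theorem eigenvector_iff_bounded_trajectory
    (n : ℕ) (hn : 0 < n) (f : (Fin n → ℝ) → (Fin n → ℝ))
    (htop : ∀ (x : Fin n → ℝ) (h : ℝ), f (fun i => x i + h) = fun i => f x i + h)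
    (hmono : Monotone f)
    (h : ℝ) :
    (∃ v : Fin n → ℝ, f v = fun i => v i + h) ↔
      ∃ (x : Fin n → ℝ) (M : ℝ), 0 ≤ M ∧
        ∀ k : ℕ, ∀ i : Fin n, |f^[k] x i - k * h| ≤ M := by
  have hne : (Finset.univ : Finset (Fin n)).Nonempty := ⟨⟨0, hn⟩, Finset.mem_univ _⟩
  constructor
  · rintro ⟨v, hv⟩
    have hiter : ∀ k : ℕ, f^[k] v = fun i => v i + k * h := by
      intro k
      induction k with
      | zero => simp
      | succ k ih =>
        rw [Function.iterate_succ_apply', ih, htop, hv]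
        funext i
        push_cast
        ring
    refine ⟨v, Finset.univ.sup' hne (fun i => |v i|),
      le_trans (abs_nonneg (v ⟨0, hn⟩))
        (Finset.le_sup' (fun i => |v i|) (Finset.mem_univ ⟨0, hn⟩)), ?_⟩
    intro k i
    rw [hiter k]
    simpa only [add_sub_cancel_right] using Finset.le_sup' (fun i => |v i|) (Finset.mem_univ i)
  · rintro ⟨x, M, hM, hbd⟩
    set g : (Fin n → ℝ) → Fin n → ℝ := fun y i => f y i - h with hg
    -- shift lemma
    have hshift : ∀ (y z : Fin n → ℝ) (c : ℝ), (∀ i, y i ≤ z i + c) →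
        ∀ i, g y i ≤ g z i + c := by
      intro y z c hyz i
      have h1 : f y ≤ f (fun i => z i + c) := hmono (fun i => hyz i)
      have h2 : f y i ≤ f z i + c := by simpa [htop] using h1 i
      show f y i - h ≤ f z i - h + c
      linarith
    have hgmono : ∀ (y z : Fin n → ℝ), y ≤ z → ∀ i, g y i ≤ g z i := by
      intro y z hyz i
      show f y i - h ≤ f z i - h
      exact sub_le_sub_right (hmono hyz i) h
    have hshift_iter : ∀ (k : ℕ) (y z : Fin n → ℝ) (c : ℝ), (∀ i, y i ≤ z i + c) →
        ∀ i, g^[k] y i ≤ g^[k] z i + c := by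
      intro k
      induction k with
      | zero => intro y z c hyz i; simpa using hyz i
      | succ k ih =>
        intro y z c hyz i
        rw [Function.iterate_succ_apply', Function.iterate_succ_apply']
        exact hshift _ _ c (ih y z c hyz) i
    -- g^[k] x = f^[k] x - k h
    have hgiter : ∀ k : ℕ, g^[k] x = fun i => f^[k] x i - k * h := by
      intro k
      induction k with
      | zero => simp
      | succ k ih =>
        rw [Function.iterate_succ_apply', ih]
        have : (fun i => f^[k] x i - (k : ℝ) * h) = fun i => f^[k] x i + (-(k * h)) := by
          funext i; ring
        rw [hg]
        funext i
        simp only [this, htop (f^[k] x) (-(k*h)), Function.iterate_succ_apply']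
        push_cast
        ring
    -- orbit of x under g lies in [-M, M]
    have horb : ∀ k : ℕ, ∀ i, -M ≤ g^[k] x i ∧ g^[k] x i ≤ M := by
      intro k i
      have hab := abs_le.mp (hbd k i)
      have heq : g^[k] x i = f^[k] x i - k * h := by rw [hgiter k]
      rw [heq]
      constructor <;> linarith [hab.1, hab.2]
    -- limsup vector
    set v : Fin n → ℝ := fun i => limsup (fun k => g^[k] x i) atTop with hvdef
    have hb_above : ∀ i, IsBoundedUnder (· ≤ ·) atTop (fun k => g^[k] x i) :=
      fun i => isBoundedUnder_of ⟨M, fun k => (horb k i).2⟩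
    have hb_below : ∀ i, IsBoundedUnder (· ≥ ·) atTop (fun k => g^[k] x i) :=
      fun i => isBoundedUnder_of ⟨-M, fun k => (horb k i).1⟩
    -- v ≤ g v
    have hv_sub : ∀ i, v i ≤ g v i := by
      intro i
      apply le_of_forall_pos_le_add
      intro ε hε
      -- eventually all coordinates are below v + ε
      have hev : ∀ᶠ k in atTop, ∀ j, g^[k] x j < v j + ε := by
        apply eventually_all.mpr
        intro j
        exact eventually_lt_of_limsup_lt (by simpa [hvdef] using hε) (hb_above j)
      obtain ⟨K, hK⟩ := eventually_atTop.mp hev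
      have hev2 : ∀ᶠ k in atTop, g^[k] x i ≤ g v i + ε := by
        rw [eventually_atTop]
        refine ⟨K + 1, fun k hk => ?_⟩
        obtain ⟨m, rfl⟩ : ∃ m, k = m + 1 := ⟨k - 1, by omega⟩
        rw [Function.iterate_succ_apply']
        exact hshift _ _ ε (fun j => (hK m (by omega) j).le) i
      exact limsup_le_of_le (hb_below i).isCoboundedUnder_le hev2
    -- bound: v ≤ x + c
    set c : ℝ := Finset.univ.sup' hne (fun i => v i - x i) with hcdef
    have hvc : ∀ i, v i ≤ x i + c := by
      intro i
      have : v i - x i ≤ c := Finset.le_sup' (fun i => v i - x i) (Finset.mem_univ i)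
      linarith
    -- the orbit of v is increasing and bounded above
    have hzmono : Monotone (fun k => g^[k] v) := by
      apply monotone_nat_of_le_succ
      intro k
      induction k with
      | zero => intro i; simpa using hv_sub i
      | succ k ih =>
        intro i
        rw [Function.iterate_succ_apply', Function.iterate_succ_apply']
        exact hgmono _ _ ih i
    have hzbdd : ∀ i, BddAbove (Set.range (fun k => g^[k] v i)) := by
      intro i
      refine ⟨M + c, ?_⟩
      rintro _ ⟨k, rfl⟩
      calc g^[k] v i ≤ g^[k] x i + c := hshift_iter k v x c hvc i
        _ ≤ M + c := by linarith [(horb k i).2]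
    set w : Fin n → ℝ := fun i => ⨆ k, g^[k] v i with hwdef
    have hzw : ∀ k, ∀ i, g^[k] v i ≤ w i := fun k i => le_ciSup (hzbdd i) k
    -- w ≤ g w
    have h1 : ∀ i, w i ≤ g w i := by
      intro i
      apply ciSup_le
      intro k
      have : g^[k] v ≤ w := fun j => hzw k j
      calc g^[k] v i ≤ g^[k+1] v i := hzmono (Nat.le_succ k) i
        _ = g (g^[k] v) i := by rw [Function.iterate_succ_apply']
        _ ≤ g w i := hgmono _ _ this i
    -- g w ≤ w
    have h2 : ∀ i, g w i ≤ w i := by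
      intro i
      apply le_of_forall_pos_le_add
      intro ε hε
      have hk : ∀ j, ∃ k, w j - ε < g^[k] v j := by
        intro j
        exact exists_lt_of_lt_ciSup (sub_lt_self _ hε)
      choose ks hks using hk
      set K : ℕ := Finset.univ.sup ks with hKdef
      have hwK : ∀ j, w j ≤ g^[K] v j + ε := by
        intro j
        have h3 : g^[ks j] v j ≤ g^[K] v j :=
          hzmono (Finset.le_sup (Finset.mem_univ j)) j
        linarith [hks j]
      calc g w i ≤ g (g^[K] v) i + ε := hshift _ _ ε hwK i
        _ = g^[K+1] v i + ε := by rw [Function.iterate_succ_apply']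
        _ ≤ w i + ε := by linarith [hzw (K+1) i]
    have hfix : ∀ i, g w i = w i := fun i => le_antisymm (h2 i) (h1 i)
    refine ⟨w, ?_⟩
    funext i
    have hwi : f w i - h = w i := hfix i
    show f w i = w i + h
    linarith
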